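/- Let F be an infinite field, let K be an algebraic closure of F, and let L be a finite-dimensional Lie algebra over F. Then there exist x, y ∈ L generating L as a Lie algebra over F if and only if there exist u, v ∈ K ⊗_F L generating K ⊗_F L as a Lie algebra over K. -/

import Mathlib

open scoped TensorProduct

namespace TwoGenAux

/-- Evaluation of a bracket word in two elements of a Lie ring. -/
def ev {M : Type*} [LieRing M] (u v : M) : FreeMagma (Fin 2) → M
  | .of j => if j = 0 then u else v
  | .mul a b => ⁅ev u v a, ev u v b⁆

lemma lie_mem_span_aux {E M : Type*} [Field E] [LieRing M] [LieAlgebra E M] (u v : M) {x y : M}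
    (hx : x ∈ Submodule.span E (Set.range (ev u v)))
    (hy : y ∈ Submodule.span E (Set.range (ev u v))) :
    ⁅x, y⁆ ∈ Submodule.span E (Set.range (ev u v)) := by
  induction hx using Submodule.span_induction with
  | mem x hx =>
    induction hy using Submodule.span_induction with
    | mem y hy =>
      obtain ⟨a, rfl⟩ := hx; obtain ⟨b, rfl⟩ := hy
      exact Submodule.subset_span ⟨a.mul b, rfl⟩
    | zero => simp
    | add y z hy hz ihy ihz => rw [lie_add]; exact Submodule.add_mem _ ihy ihz
    | smul t y hy ihy => rw [lie_smul]; exact Submodule.smul_mem _ _ ihy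
  | zero => simp
  | add x z hx hz ihx ihz => rw [add_lie]; exact Submodule.add_mem _ ihx ihz
  | smul t x hx ihx => rw [smul_lie]; exact Submodule.smul_mem _ _ ihx

lemma lieSpan_pair_eq_top_iff {E M : Type*} [Field E] [LieRing M] [LieAlgebra E M] (u v : M) :
    LieSubalgebra.lieSpan E M {u, v} = ⊤ ↔
      Submodule.span E (Set.range (ev u v)) = ⊤ := by
  let S : LieSubalgebra E M :=
    { Submodule.span E (Set.range (ev u v)) with
      lie_mem' := fun hx hy => lie_mem_span_aux u v hx hy }
  have h1 : LieSubalgebra.lieSpan E M {u, v} ≤ S := by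
    rw [LieSubalgebra.lieSpan_le]
    rintro z (rfl | rfl)
    · exact Submodule.subset_span ⟨.of 0, by simp [ev]⟩
    · exact Submodule.subset_span ⟨.of 1, by simp [ev]⟩
  have h2 : ∀ w, ev u v w ∈ LieSubalgebra.lieSpan E M {u, v} := by
    intro w
    induction w with
    | ih1 j =>
      apply LieSubalgebra.subset_lieSpan
      by_cases h : j = 0
      · simp only [ev, h, if_pos rfl]; exact Set.mem_insert _ _
      · simp only [ev, if_neg h]; exact Set.mem_insert_of_mem _ rfl
    | ih2 a b iha ihb => exact (LieSubalgebra.lieSpan E M {u, v}).lie_mem iha ihb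
  constructor
  · intro h
    rw [eq_top_iff]
    intro z _
    exact h1 (by rw [h]; exact LieSubalgebra.mem_top z)
  · intro h
    rw [eq_top_iff]
    intro z _
    have : Submodule.span E (Set.range (ev u v)) ≤
        (LieSubalgebra.lieSpan E M {u, v} : Submodule E M) := by
      rw [Submodule.span_le]
      rintro _ ⟨w, rfl⟩
      exact h2 w
    exact this (by rw [h]; trivial)

/-- The coordinate polynomials of a bracket word, given structure constants `st`. -/
noncomputable def pol {F : Type*} [CommRing F] {d : ℕ} (st : Fin d → Fin d → Fin d → F) :
    FreeMagma (Fin 2) → Fin d → MvPolynomial (Fin 2 × Fin d) F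
  | .of j, i => MvPolynomial.X (j, i)
  | .mul a b, i => ∑ j, ∑ k, MvPolynomial.C (st j k i) * pol st a j * pol st b k

lemma sum_lie_gen {M : Type*} [LieRing M] {ι : Type*} (s : Finset ι) (f : ι → M) (n : M) :
    ⁅∑ j ∈ s, f j, n⁆ = ∑ j ∈ s, ⁅f j, n⁆ := by
  induction s using Finset.cons_induction with
  | empty => simp
  | cons a s h ih => rw [Finset.sum_cons, Finset.sum_cons, add_lie, ih]

lemma lie_sum_gen {M : Type*} [LieRing M] {ι : Type*} (s : Finset ι) (x : M) (f : ι → M) :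
    ⁅x, ∑ j ∈ s, f j⁆ = ∑ j ∈ s, ⁅x, f j⁆ := by
  induction s using Finset.cons_induction with
  | empty => simp
  | cons a s h ih => rw [Finset.sum_cons, Finset.sum_cons, lie_add, ih]

lemma repr_lie {E M : Type*} [Field E] [LieRing M] [LieAlgebra E M] {d : ℕ}
    (c : Module.Basis (Fin d) E M) (m n : M) (i : Fin d) :
    c.repr ⁅m, n⁆ i = ∑ j, ∑ k, c.repr m j * c.repr n k * c.repr ⁅c j, c k⁆ i := by
  conv_lhs => rw [← c.sum_repr m, ← c.sum_repr n]
  rw [sum_lie_gen]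
  simp only [smul_lie, lie_sum_gen, lie_smul, smul_smul, map_sum, map_smul,
    Finsupp.coe_finset_sum, Finset.sum_apply, Finsupp.coe_smul, Pi.smul_apply, smul_eq_mul]
  exact Finset.sum_congr rfl fun j _ => Finset.sum_congr rfl fun k _ => by ring

lemma repr_ev {F E M : Type*} [Field F] [Field E] [Algebra F E] [LieRing M] [LieAlgebra E M]
    {d : ℕ} (c : Module.Basis (Fin d) E M) (st : Fin d → Fin d → Fin d → F)
    (hc : ∀ j k i, c.repr ⁅c j, c k⁆ i = algebraMap F E (st j k i))
    (u v : M) (w : FreeMagma (Fin 2)) (i : Fin d) :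
    c.repr (ev u v w) i =
      MvPolynomial.eval (fun p : Fin 2 × Fin d => if p.1 = 0 then c.repr u p.2 else c.repr v p.2)
        (MvPolynomial.map (algebraMap F E) (pol st w i)) := by
  induction w generalizing i with
  | ih1 j =>
    by_cases h : j = 0 <;> simp [ev, pol, h]
  | ih2 a b iha ihb =>
    rw [show ev u v (a * b) = ⁅ev u v a, ev u v b⁆ from rfl, repr_lie c]
    rw [show pol st (a * b) i = ∑ j, ∑ k, MvPolynomial.C (st j k i) * pol st a j * pol st b k
      from rfl]
    simp only [map_sum, map_mul, MvPolynomial.map_C, MvPolynomial.eval_C]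
    exact Finset.sum_congr rfl fun j _ => Finset.sum_congr rfl fun k _ => by
      rw [iha, ihb, hc]; ring

/-- Master lemma: two-generation over `E` is equivalent to non-vanishing of one of the
determinant polynomials over `F`. -/
lemma master {F E : Type*} [Field F] [Field E] [Algebra F E] [Infinite E]
    {M : Type*} [LieRing M] [LieAlgebra E M] {d : ℕ}
    (c : Module.Basis (Fin d) E M) (st : Fin d → Fin d → Fin d → F)
    (hc : ∀ j k i, c.repr ⁅c j, c k⁆ i = algebraMap F E (st j k i)) :
    (∃ u v : M, LieSubalgebra.lieSpan E M {u, v} = ⊤) ↔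
      ∃ w : Fin d → FreeMagma (Fin 2),
        Matrix.det (Matrix.of fun i i' => pol st (w i') i) ≠ 0 := by
  haveI : FiniteDimensional E M := c.finiteDimensional_of_finite
  have hd : Module.finrank E M = d := Module.finrank_eq_card_basis c |>.trans (by simp)
  constructor
  · rintro ⟨u, v, h⟩
    rw [lieSpan_pair_eq_top_iff] at h
    obtain ⟨s, hsub, hspan, hind⟩ := exists_linearIndependent E (Set.range (ev u v))
    rw [h] at hspan
    haveI : Fintype s := (hind.setFinite).fintype
    let B : Module.Basis s E M := Module.Basis.mk hind (by rw [Subtype.range_coe, hspan])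
    have hcard : Fintype.card (Fin d) = Fintype.card s := by
      rw [Fintype.card_fin, ← hd, Module.finrank_eq_card_basis B]
    let e : Fin d ≃ s := Fintype.equivOfCardEq hcard
    let B' : Module.Basis (Fin d) E M := B.reindex e.symm
    have hB' : ∀ i, ∃ w, ev u v (w : FreeMagma (Fin 2)) = B' i := by
      intro i
      have : (B' i : M) ∈ Set.range (ev u v) := by
        have : B' i = ((e i : M)) := by simp [B', B, Module.Basis.mk_apply]
        rw [this]
        exact hsub (e i).2
      exact this
    choose w hw using hB'
    refine ⟨w, fun hQ => ?_⟩
    have key : (MvPolynomial.eval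
        (fun p : Fin 2 × Fin d => if p.1 = 0 then c.repr u p.2 else c.repr v p.2)).comp
          (MvPolynomial.map (algebraMap F E))
        (Matrix.det (Matrix.of fun i i' => pol st (w i') i)) =
        Matrix.det (Matrix.of fun i i' => c.repr (B' i') i) := by
      rw [RingHom.map_det]
      congr 1
      ext i i'
      simp only [RingHom.mapMatrix_apply, Matrix.map_apply, Matrix.of_apply, RingHom.comp_apply]
      rw [← repr_ev c st hc u v (w i') i, hw]
    have hun : IsUnit (c.det B') := c.isUnit_det B'
    rw [Module.Basis.det_apply] at hun
    have hmat : Matrix.det (Matrix.of fun i i' => c.repr (B' i') i) ≠ 0 := by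
      have : c.toMatrix B' = Matrix.of fun i i' => c.repr (B' i') i := by
        ext i i'; simp [Module.Basis.toMatrix_apply]
      rw [← this]
      exact hun.ne_zero
    rw [hQ, map_zero] at key
    exact hmat key.symm
  · rintro ⟨w, hQ⟩
    set Q : MvPolynomial (Fin 2 × Fin d) F :=
      Matrix.det (Matrix.of fun i i' => pol st (w i') i) with hQdef
    have hinj : Function.Injective (algebraMap F E) := (algebraMap F E).injective
    have hmapQ : MvPolynomial.map (algebraMap F E) Q ≠ 0 := by
      intro h
      exact hQ (MvPolynomial.map_injective _ hinj (by rw [h, map_zero]))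
    obtain ⟨a, ha⟩ : ∃ a : Fin 2 × Fin d → E,
        MvPolynomial.eval a (MvPolynomial.map (algebraMap F E) Q) ≠ 0 := by
      by_contra hcon
      push_neg at hcon
      exact hmapQ (MvPolynomial.funext fun x => by rw [hcon x, map_zero])
    set u : M := ∑ i, a (0, i) • c i with hu
    set v : M := ∑ i, a (1, i) • c i with hv
    have hru : ∀ i, c.repr u i = a (0, i) := by
      intro i; rw [hu, Module.Basis.repr_sum_self]
    have hrv : ∀ i, c.repr v i = a (1, i) := by
      intro i; rw [hv, Module.Basis.repr_sum_self]
    have hpt : (fun p : Fin 2 × Fin d => if p.1 = 0 then c.repr u p.2 else c.repr v p.2) = a := by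
      funext p
      obtain ⟨j, i⟩ := p
      by_cases h : j = 0
      · subst h; simp [hru]
      · have : j = 1 := by omega
        subst this; simp [hrv]
    have key : Matrix.det (Matrix.of fun i i' => c.repr (ev u v (w i')) i) =
        MvPolynomial.eval a (MvPolynomial.map (algebraMap F E) Q) := by
      rw [hQdef, ← hpt]
      rw [show (MvPolynomial.eval
          (fun p : Fin 2 × Fin d => if p.1 = 0 then c.repr u p.2 else c.repr v p.2))
            (MvPolynomial.map (algebraMap F E)
              (Matrix.det (Matrix.of fun i i' => pol st (w i') i))) =
          ((MvPolynomial.eval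
          (fun p : Fin 2 × Fin d => if p.1 = 0 then c.repr u p.2 else c.repr v p.2)).comp
            (MvPolynomial.map (algebraMap F E)))
            (Matrix.det (Matrix.of fun i i' => pol st (w i') i)) from rfl]
      rw [RingHom.map_det]
      congr 1
      ext i i'
      simp only [RingHom.mapMatrix_apply, Matrix.map_apply, Matrix.of_apply, RingHom.comp_apply]
      rw [← repr_ev c st hc u v (w i') i]
    have hdet : IsUnit (c.det fun i' => ev u v (w i')) := by
      rw [Module.Basis.det_apply, isUnit_iff_ne_zero]
      have : c.toMatrix (fun i' => ev u v (w i')) =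
          Matrix.of fun i i' => c.repr (ev u v (w i')) i := by
        ext i i'; simp [Module.Basis.toMatrix_apply]
      rw [this, key]
      exact ha
    obtain ⟨-, hspan⟩ := (Module.Basis.is_basis_iff_det c).mpr hdet
    refine ⟨u, v, (lieSpan_pair_eq_top_iff u v).mpr ?_⟩
    rw [eq_top_iff, ← hspan]
    apply Submodule.span_mono
    rintro _ ⟨i', rfl⟩
    exact ⟨w i', rfl⟩

end TwoGenAux

/-- For an infinite field `F` with algebraic closure `K` and a finite-dimensional
Lie algebra `L` over `F`, `L` is generated by two elements over `F` iff `K ⊗[F] L` is generated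
by two elements over `K`. -/
theorem generated_by_two_iff_baseChange_generated_by_two
    (F K : Type) [Field F] [Infinite F] [Field K] [Algebra F K] [IsAlgClosure F K]
    (L : Type) [LieRing L] [LieAlgebra F L] [FiniteDimensional F L] :
    (∃ x y : L, LieSubalgebra.lieSpan F L {x, y} = ⊤) ↔
      (∃ u v : K ⊗[F] L, LieSubalgebra.lieSpan K (K ⊗[F] L) {u, v} = ⊤) := by
  haveI : IsAlgClosed K := IsAlgClosure.isAlgClosed F
  set d := Module.finrank F L with hd
  let b : Module.Basis (Fin d) F L := Module.finBasis F L
  let st : Fin d → Fin d → Fin d → F := fun j k i => b.repr ⁅b j, b k⁆ i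
  have h1 : (∃ x y : L, LieSubalgebra.lieSpan F L {x, y} = ⊤) ↔
      ∃ w : Fin d → FreeMagma (Fin 2),
        Matrix.det (Matrix.of fun i i' => TwoGenAux.pol st (w i') i) ≠ 0 :=
    TwoGenAux.master b st (fun j k i => by simp [st])
  have h2 : (∃ u v : K ⊗[F] L, LieSubalgebra.lieSpan K (K ⊗[F] L) {u, v} = ⊤) ↔
      ∃ w : Fin d → FreeMagma (Fin 2),
        Matrix.det (Matrix.of fun i i' => TwoGenAux.pol st (w i') i) ≠ 0 := by
    refine TwoGenAux.master (b.baseChange K) st (fun j k i => ?_)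
    have hb : ⁅(b.baseChange K) j, (b.baseChange K) k⁆ =
        (1 : K) ⊗ₜ[F] ⁅b j, b k⁆ := by
      rw [Module.Basis.baseChange_apply, Module.Basis.baseChange_apply]
      rw [LieAlgebra.ExtendScalars.bracket_tmul, one_mul]
    rw [hb, Module.Basis.baseChange_repr_tmul, Algebra.smul_def, mul_one]
  rw [h1, h2]
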